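/- A stable state (vertex with no outgoing edges forming a single-vertex attractor) exists in 𝔹(Γ) if and only if one exists in Γ; likewise a cyclic attractor (attractor with more than one vertex) exists in 𝔹(Γ) if and only if one exists in Γ. -/
import Mathlib


/-!
Common setup: multilevel discrete networks (Faure–Kaji, "A circuit-preserving
mapping from multilevel to Boolean dynamics").

A gene `i` takes levels in `{0,...,b i}`, encoded as `Fin (b i + 1)`.
The Boolean case is `b i = 1`.
-/

namespace GRN

section Generic

variable {ι : Type*} [Fintype ι] [DecidableEq ι] (b : ι → ℕ)

/-- the state space `∏ i {0,…,b i}` -/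
abbrev GState := ∀ i : ι, Fin (b i + 1)

/-- L¹ distance between states -/
def dist1 (x x' : GState b) : ℕ := ∑ i, Nat.dist (x i : ℕ) (x' i : ℕ)

/-- edge relation of the asynchronous state transition graph `Γ(f)` -/
def stgEdge (f : GState b → GState b) (x x' : GState b) : Prop :=
  ∃ j : ι, (∀ k, k ≠ j → x' k = x k) ∧
    (((x j : ℕ) < (f x j : ℕ) ∧ (x' j : ℕ) = (x j : ℕ) + 1) ∨
     ((f x j : ℕ) < (x j : ℕ) ∧ (x' j : ℕ) + 1 = (x j : ℕ)))

/-- a grid graph: every edge joins states at distance one, and there are no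
two parallel outward edges at any vertex -/
def IsGridGraph (E : GState b → GState b → Prop) : Prop :=
  (∀ x x', E x x' → dist1 b x x' = 1) ∧
  (∀ (x x' x'' : GState b) (j : ι), E x x' → E x x'' →
    (∀ k, k ≠ j → x' k = x k) → (∀ k, k ≠ j → x'' k = x k) → x' = x'')

/-- asymptotic evolution function: `f i x ∈ {0, x i, b i}` -/
def Asymptotic (f : GState b → GState b) : Prop :=
  ∀ (x : GState b) (i : ι), (f x i : ℕ) = 0 ∨ f x i = x i ∨ (f x i : ℕ) = b i

/-- stepwise (unitary) evolution function: `|f i x - x i| ≤ 1` -/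
def Stepwise (f : GState b → GState b) : Prop :=
  ∀ (x : GState b) (i : ι), (f x i : ℕ) ≤ (x i : ℕ) + 1 ∧ (x i : ℕ) ≤ (f x i : ℕ) + 1

/-- the asymptotic function `f̄` associated with `f` -/
def asym (f : GState b → GState b) : GState b → GState b := fun x i =>
  if (x i : ℕ) < (f x i : ℕ) then Fin.last (b i)
  else if (f x i : ℕ) < (x i : ℕ) then 0 else x i

/-- the stepwise function `f̂` associated with `f` -/
def stepw (f : GState b → GState b) : GState b → GState b := fun x i =>
  if h : (x i : ℕ) < (f x i : ℕ) then ⟨(x i : ℕ) + 1, Nat.lt_of_le_of_lt h (f x i).isLt⟩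
  else if (f x i : ℕ) < (x i : ℕ) then
    ⟨(x i : ℕ) - 1, lt_of_le_of_lt (Nat.sub_le _ _) (x i).isLt⟩
  else x i

/-- `x + e j` (defined when `x j < b j`) -/
def bump (x : GState b) (j : ι) (h : (x j : ℕ) < b j) : GState b :=
  Function.update x j ⟨(x j : ℕ) + 1, Nat.succ_lt_succ h⟩

/-- `x - e j` -/
def drop (x : GState b) (j : ι) : GState b :=
  Function.update x j ⟨(x j : ℕ) - 1, lt_of_le_of_lt (Nat.sub_le _ _) (x j).isLt⟩

/-- positive edge `j → i` in the local interaction graph `Gf(x)`: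
`∂⁺ⱼfᵢ(x) > 0` or `∂⁻ⱼfᵢ(x) > 0` -/
def PosEdge (f : GState b → GState b) (x : GState b) (j i : ι) : Prop :=
  (∃ h : (x j : ℕ) < b j, (f x i : ℕ) < (f (bump b x j h) i : ℕ)) ∨
  (0 < (x j : ℕ) ∧ (f (drop b x j) i : ℕ) < (f x i : ℕ))

/-- negative edge `j → i` in the local interaction graph `Gf(x)` -/
def NegEdge (f : GState b → GState b) (x : GState b) (j i : ι) : Prop :=
  (∃ h : (x j : ℕ) < b j, (f (bump b x j h) i : ℕ) < (f x i : ℕ)) ∨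
  (0 < (x j : ℕ) ∧ (f x i : ℕ) < (f (drop b x j) i : ℕ))

/-- an edge with sign `s` (`true` = negative) -/
def SignedEdge (f : GState b → GState b) (x : GState b) (s : Bool) (j i : ι) : Prop :=
  if s then NegEdge b f x j i else PosEdge b f x j i

/-- a type-1 functional circuit at `x`, negative iff `neg`: a cycle (with
pairwise-distinct vertices) in the local interaction graph `Gf(x)` whose number
of negative edges is odd iff `neg` -/
def HasType1Circuit (f : GState b → GState b) (x : GState b) (neg : Bool) : Prop :=
  ∃ (k : ℕ) (v : Fin (k + 1) → ι) (s : Fin (k + 1) → Bool),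
    Function.Injective v ∧
    (∀ t, SignedEdge b f x (s t) (v t) (v (t + 1))) ∧
    (Odd (Finset.univ.filter fun t => s t = true).card ↔ neg = true)

/-- mutual reachability -/
def InSameSCC (E : GState b → GState b → Prop) (x y : GState b) : Prop :=
  Relation.ReflTransGen E x y ∧ Relation.ReflTransGen E y x

/-- the strongly connected component of `x` -/
def sccOf (E : GState b → GState b → Prop) (x : GState b) : Set (GState b) :=
  {y | InSameSCC b E x y}

/-- attractor: terminal strongly connected set of states -/
def IsAttractor (E : GState b → GState b → Prop) (A : Set (GState b)) : Prop :=
  A.Nonempty ∧ (∀ x ∈ A, ∀ y ∈ A, Relation.ReflTransGen E x y) ∧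
  (∀ x ∈ A, ∀ y, E x y → y ∈ A)

/-- stable state: no outgoing edges -/
def IsStable (E : GState b → GState b → Prop) (x : GState b) : Prop :=
  ∀ y, ¬ E x y

end Generic

section Binarisation

variable {n : ℕ} {m : Fin n → ℕ}

/-- index set of the Boolean state space `𝔹^(m₁+⋯+mₙ)` -/
abbrev BIdx (m : Fin n → ℕ) := Σ i : Fin n, Fin (m i)

/-- all maximal levels equal to 1 -/
abbrev bOne (m : Fin n → ℕ) : BIdx m → ℕ := fun _ => 1

/-- the Boolean state space `𝔹^(m₁+⋯+mₙ)` -/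
abbrev BState (m : Fin n → ℕ) := GState (bOne m)

/-- the surjection `ψ : 𝔹^(m₁+⋯+mₙ) → M`, counting ones in each block -/
def psi (x : BState m) : GState m := fun i =>
  ⟨∑ j : Fin (m i), (x ⟨i, j⟩ : ℕ), Nat.lt_succ_of_le (by
    calc ∑ j : Fin (m i), (x ⟨i, j⟩ : ℕ) ≤ ∑ _j : Fin (m i), 1 :=
          Finset.sum_le_sum (fun j _ => Nat.lt_succ_iff.mp (x ⟨i, j⟩).isLt)
      _ = m i := by simp)⟩

/-- Van Ham's embedding `b₀ : M → 𝔹^(m₁+⋯+mₙ)`: level `k` ↦ `k` ones then zeros -/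
def vanHam (y : GState m) : BState m := fun p =>
  if (p.2 : ℕ) < (y p.1 : ℕ) then 1 else 0

/-- the binarisation `𝔹(f)` of an (asymptotic) evolution function `f` -/
def binf (f : GState m → GState m) : BState m → BState m := fun x p =>
  if (psi x p.1 : ℕ) < (f (psi x) p.1 : ℕ) then 1
  else if (f (psi x) p.1 : ℕ) < (psi x p.1 : ℕ) then 0
  else x p

/-- the binarisation `𝔹(Γ)` of a grid graph over `M`:
edge `x → x'` iff `d(x,x') = 1` and `ψ(x) → ψ(x')` in `Γ` -/
def binGraph (E : GState m → GState m → Prop) : BState m → BState m → Prop :=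
  fun x x' => dist1 (bOne m) x x' = 1 ∧ E (psi x) (psi x')

/-- the action of `𝕊 = ∏ᵢ S_{mᵢ}` on `𝔹^(m₁+⋯+mₙ)` permuting blocks coordinatewise -/
def act (σ : ∀ i : Fin n, Equiv.Perm (Fin (m i))) (x : BState m) : BState m :=
  fun p => x ⟨p.1, σ p.1 p.2⟩

/-- `𝕊`-symmetric Boolean evolution function -/
def SSym (g : BState m → BState m) : Prop :=
  ∀ (σ : ∀ i : Fin n, Equiv.Perm (Fin (m i))) (x : BState m) (p : BIdx m),
    g (act σ x) p = g x ⟨p.1, σ p.1 p.2⟩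

end Binarisation

section Aux

/-- a sum of naturals equal to one has exactly one nonzero (= 1) term -/
lemma sum_nat_eq_one {α : Type*} [Fintype α] [DecidableEq α] (f : α → ℕ)
    (h : ∑ a, f a = 1) : ∃ a, f a = 1 ∧ ∀ b, b ≠ a → f b = 0 := by
  have hex : ∃ a, f a ≠ 0 := by
    by_contra hno
    push_neg at hno
    rw [Finset.sum_eq_zero (fun a _ => hno a)] at h
    omega
  obtain ⟨a, ha⟩ := hex
  have hsplit := Finset.add_sum_erase Finset.univ f (Finset.mem_univ a)
  rw [h] at hsplit
  have hfa : f a = 1 := by omega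
  have hrest : ∑ b ∈ Finset.univ.erase a, f b = 0 := by omega
  refine ⟨a, hfa, fun b hb => ?_⟩
  exact Finset.sum_eq_zero_iff.1 hrest b (Finset.mem_erase.2 ⟨hb, Finset.mem_univ b⟩)

/-- sets closed under single steps are closed under reflexive-transitive steps -/
lemma closed_rtg {V : Type*} {R : V → V → Prop} {C : Set V}
    (hcl : ∀ x ∈ C, ∀ y, R x y → y ∈ C) {a b : V}
    (h : Relation.ReflTransGen R a b) (ha : a ∈ C) : b ∈ C := by
  induction h with
  | refl => exact ha
  | tail _ e ih => exact hcl _ ih _ e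

/-- from any vertex of a finite digraph one reaches a terminal SCC -/
lemma exists_attractor_from {V : Type*} [Fintype V] (R : V → V → Prop) (x0 : V) :
    ∃ A : Set V, A.Nonempty ∧ (∀ x ∈ A, ∀ y ∈ A, Relation.ReflTransGen R x y) ∧
      (∀ x ∈ A, ∀ y, R x y → y ∈ A) ∧ ∀ x ∈ A, Relation.ReflTransGen R x0 x := by
  classical
  let F : V → Finset V := fun u => Finset.univ.filter (fun v => Relation.ReflTransGen R u v)
  have memF : ∀ u v, v ∈ F u ↔ Relation.ReflTransGen R u v := by
    intro u v; simp [F]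
  obtain ⟨u, hu, hmin⟩ := Finset.exists_min_image (F x0) (fun u => (F u).card)
    ⟨x0, (memF _ _).2 Relation.ReflTransGen.refl⟩
  have hFsub : ∀ v ∈ F u, F v ⊆ F u := fun v hv w hw =>
    (memF u w).2 (((memF u v).1 hv).trans ((memF v w).1 hw))
  have hFeq : ∀ v ∈ F u, F v = F u := by
    intro v hv
    have hv0 : v ∈ F x0 := (memF _ _).2 (((memF x0 u).1 hu).trans ((memF u v).1 hv))
    exact Finset.eq_of_subset_of_card_le (hFsub v hv) (hmin v hv0)
  refine ⟨↑(F u), ⟨u, (memF u u).2 Relation.ReflTransGen.refl⟩, ?_, ?_, ?_⟩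
  · intro x hx y hy
    have hx' : x ∈ F u := hx
    have hy' : y ∈ F u := hy
    rw [← hFeq x hx'] at hy'
    exact (memF x y).1 hy'
  · intro x hx y hxy
    exact (memF u y).2 (Relation.ReflTransGen.tail ((memF u x).1 hx) hxy)
  · intro x hx
    exact ((memF x0 u).1 hu).trans ((memF u x).1 hx)

variable {n : ℕ} {m : Fin n → ℕ}

lemma psi_apply_val (x : BState m) (i : Fin n) :
    (psi x i : ℕ) = ∑ j : Fin (m i), (x ⟨i, j⟩ : ℕ) := rfl

lemma psi_vanHam (y : GState m) : psi (vanHam y) = y := by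
  funext i
  apply Fin.ext
  rw [psi_apply_val]
  have hcast : ∀ j : Fin (m i), ((vanHam y ⟨i, j⟩ : Fin 2) : ℕ) =
      if (j : ℕ) < (y i : ℕ) then 1 else 0 := by
    intro j
    unfold vanHam
    split_ifs <;> rfl
  rw [Finset.sum_congr rfl (fun j _ => hcast j)]
  rw [Finset.sum_boole]
  have hfil : Finset.univ.filter (fun j : Fin (m i) => (j : ℕ) < (y i : ℕ)) =
      (Finset.range (y i : ℕ)).attachFin (fun j hj =>
        lt_of_lt_of_le (Finset.mem_range.1 hj) (Nat.lt_succ_iff.mp (y i).isLt)) := by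
    ext j
    simp [Finset.mem_attachFin]
  rw [hfil, Finset.card_attachFin, Finset.card_range]
  exact Nat.cast_id _

lemma psi_update_ne (x : BState m) (p0 : BIdx m) (v : Fin 2) {i : Fin n} (h : i ≠ p0.1) :
    psi (Function.update x p0 v) i = psi x i := by
  apply Fin.ext
  rw [psi_apply_val, psi_apply_val]
  refine Finset.sum_congr rfl fun j _ => ?_
  congr 1
  apply Function.update_of_ne
  intro hh
  exact h (by rw [← hh])

lemma block_update_eq (x : BState m) (i : Fin n) (j0 : Fin (m i)) (v : Fin 2) :
    (fun j : Fin (m i) => ((Function.update x ⟨i, j0⟩ v) ⟨i, j⟩ : ℕ)) =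
      Function.update (fun j : Fin (m i) => (x ⟨i, j⟩ : ℕ)) j0 (v : ℕ) := by
  funext j
  by_cases h : j = j0
  · subst h; simp
  · rw [Function.update_of_ne h, Function.update_of_ne]
    intro hh
    apply h
    have := (Sigma.mk.inj_iff.1 hh).2
    exact eq_of_heq this

lemma psi_update_val (x : BState m) (i : Fin n) (j0 : Fin (m i)) (v : Fin 2) :
    (psi (Function.update x ⟨i, j0⟩ v) i : ℕ) + (x ⟨i, j0⟩ : ℕ) = (psi x i : ℕ) + (v : ℕ) := by
  rw [psi_apply_val, psi_apply_val]
  have h1 : ∑ j : Fin (m i), ((Function.update x ⟨i, j0⟩ v) ⟨i, j⟩ : ℕ) =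
      ∑ j : Fin (m i), Function.update (fun j : Fin (m i) => (x ⟨i, j⟩ : ℕ)) j0 (v : ℕ) j := by
    rw [block_update_eq]
  rw [h1, Finset.sum_update_of_mem (Finset.mem_univ j0),
    ← Finset.add_sum_erase Finset.univ _ (Finset.mem_univ j0),
    Finset.sdiff_singleton_eq_erase]
  ring

lemma dist1_update (x : BState m) (p0 : BIdx m) (v : Fin 2) :
    dist1 (bOne m) x (Function.update x p0 v) = Nat.dist (x p0 : ℕ) (v : ℕ) := by
  unfold dist1
  rw [Finset.sum_eq_single p0]
  · rw [Function.update_self]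
  · intro p _ hp
    rw [Function.update_of_ne hp, Nat.dist_self]
  · exact fun h => absurd (Finset.mem_univ p0) h

lemma lift_dist (x : BState m) (y : GState m) (h : dist1 m (psi x) y = 1) :
    ∃ x' : BState m, dist1 (bOne m) x x' = 1 ∧ psi x' = y := by
  obtain ⟨i0, hi0, hrest⟩ := sum_nat_eq_one
    (fun i => Nat.dist (psi x i : ℕ) (y i : ℕ)) h
  have hrest' : ∀ i, i ≠ i0 → psi x i = y i := by
    intro i hi
    have := hrest i hi
    unfold Nat.dist at this
    exact Fin.ext (by omega)
  have hd : (psi x i0 : ℕ) + 1 = (y i0 : ℕ) ∨ (y i0 : ℕ) + 1 = (psi x i0 : ℕ) := by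
    unfold Nat.dist at hi0; omega
  rcases hd with hup | hdown
  · -- increase: find a zero bit in block i0
    have hlt : ∑ j : Fin (m i0), (x ⟨i0, j⟩ : ℕ) < m i0 := by
      have hy : (y i0 : ℕ) ≤ m i0 := Nat.lt_succ_iff.mp (y i0).isLt
      have hv := psi_apply_val x i0
      omega
    have hj : ∃ j0 : Fin (m i0), (x ⟨i0, j0⟩ : ℕ) = 0 := by
      by_contra hno
      push_neg at hno
      have h1 : ∀ j ∈ (Finset.univ : Finset (Fin (m i0))), 1 ≤ (x ⟨i0, j⟩ : ℕ) :=
        fun j _ => Nat.one_le_iff_ne_zero.2 (hno j)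
      have := Finset.sum_le_sum h1
      simp at this
      omega
    obtain ⟨j0, hj0⟩ := hj
    refine ⟨Function.update x ⟨i0, j0⟩ 1, ?_, ?_⟩
    · rw [dist1_update, hj0]
      rfl
    · funext i
      by_cases hi : i = i0
      · subst hi
        apply Fin.ext
        have hval := psi_update_val x i j0 1
        have hv1 : ((1 : Fin 2) : ℕ) = 1 := rfl
        omega
      · exact (psi_update_ne x _ _ hi).trans (hrest' i hi)
  · -- decrease: find a one bit in block i0
    have hpos : 0 < ∑ j : Fin (m i0), (x ⟨i0, j⟩ : ℕ) := by
      have hv := psi_apply_val x i0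
      omega
    have hj : ∃ j0 : Fin (m i0), (x ⟨i0, j0⟩ : ℕ) ≠ 0 := by
      by_contra hno
      push_neg at hno
      rw [Finset.sum_eq_zero (fun j _ => hno j)] at hpos
      omega
    obtain ⟨j0, hj0⟩ := hj
    have hj1 : (x ⟨i0, j0⟩ : ℕ) = 1 := by
      have h2 : (x ⟨i0, j0⟩ : ℕ) < 2 := (x ⟨i0, j0⟩).isLt
      omega
    refine ⟨Function.update x ⟨i0, j0⟩ 0, ?_, ?_⟩
    · rw [dist1_update, hj1]
      rfl
    · funext i
      by_cases hi : i = i0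
      · subst hi
        apply Fin.ext
        have hval := psi_update_val x i j0 0
        have hv0 : ((0 : Fin 2) : ℕ) = 0 := rfl
        omega
      · exact (psi_update_ne x _ _ hi).trans (hrest' i hi)

variable {E : GState m → GState m → Prop}

lemma lift_edge (hE : IsGridGraph m E) (x : BState m) {y : GState m} (h : E (psi x) y) :
    ∃ x', binGraph E x x' ∧ psi x' = y := by
  obtain ⟨x', hd, hpsi⟩ := lift_dist x y (hE.1 _ _ h)
  exact ⟨x', ⟨hd, by rw [hpsi]; exact h⟩, hpsi⟩

lemma project_path {x x' : BState m}
    (h : Relation.ReflTransGen (binGraph E) x x') :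
    Relation.ReflTransGen E (psi x) (psi x') := by
  induction h with
  | refl => exact Relation.ReflTransGen.refl
  | tail _ e ih => exact Relation.ReflTransGen.tail ih e.2

lemma edge_dist_ne (hE : IsGridGraph m E) {y z : GState m} (h : E y z) : y ≠ z := by
  intro hyz
  have hd := hE.1 _ _ h
  rw [hyz] at hd
  simp [dist1, Nat.dist_self] at hd

end Aux

/-- a stable state exists in `𝔹(Γ)` iff one exists in `Γ`, and a
cyclic attractor exists in `𝔹(Γ)` iff one exists in `Γ`. -/
theorem stable_and_cyclic_iff
    {n : ℕ} {m : Fin n → ℕ} (E : GState m → GState m → Prop)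
    (hE : IsGridGraph m E) :
    ((∃ x : BState m, IsStable (bOne m) (binGraph E) x) ↔
      (∃ y : GState m, IsStable m E y)) ∧
    ((∃ A : Set (BState m), IsAttractor (bOne m) (binGraph E) A ∧ ¬ A.Subsingleton) ↔
      (∃ C : Set (GState m), IsAttractor m E C ∧ ¬ C.Subsingleton)) := by
  constructor
  · constructor
    · rintro ⟨x, hx⟩
      refine ⟨psi x, fun y hy => ?_⟩
      obtain ⟨x', he, -⟩ := lift_edge hE x hy
      exact hx x' he
    · rintro ⟨y, hy⟩
      refine ⟨vanHam y, fun x' hx' => ?_⟩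
      have h2 := hx'.2
      rw [psi_vanHam] at h2
      exact hy _ h2
  · constructor
    · rintro ⟨A, ⟨hne, hstr, hcl⟩, hns⟩
      refine ⟨psi '' A, ⟨hne.image _, ?_, ?_⟩, ?_⟩
      · rintro _ ⟨a, ha, rfl⟩ _ ⟨c, hc, rfl⟩
        exact project_path (hstr a ha c hc)
      · rintro _ ⟨a, ha, rfl⟩ z hz
        obtain ⟨x', he, rfl⟩ := lift_edge hE a hz
        exact ⟨x', hcl a ha x' he, rfl⟩
      · intro hsub
        apply hns
        intro a ha c hc
        by_contra hac
        rcases (hstr a ha c hc).cases_head with rfl | ⟨w, hw, -⟩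
        · exact hac rfl
        · have hwA := hcl a ha w hw
          have hpp : psi a = psi w := hsub ⟨a, ha, rfl⟩ ⟨w, hwA, rfl⟩
          exact edge_dist_ne hE hw.2 hpp
    · rintro ⟨C, ⟨⟨y0, hy0⟩, hstr, hcl⟩, hns⟩
      obtain ⟨A, hAne, hAstr, hAcl, hAreach⟩ := exists_attractor_from (binGraph E) (vanHam y0)
      refine ⟨A, ⟨hAne, hAstr, hAcl⟩, fun hsub => ?_⟩
      obtain ⟨x, hx⟩ := hAne
      have hxC : psi x ∈ C := by
        have hp := project_path (hAreach x hx)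
        rw [psi_vanHam] at hp
        exact closed_rtg hcl hp hy0
      obtain ⟨z1, hz1, z2, hz2, hzne⟩ := Set.not_subsingleton_iff.1 hns
      obtain ⟨z, hz, hzx⟩ : ∃ z ∈ C, z ≠ psi x := by
        by_cases h1 : z1 = psi x
        · exact ⟨z2, hz2, fun hh => hzne (by rw [h1, hh])⟩
        · exact ⟨z1, hz1, h1⟩
      rcases (hstr _ hxC _ hz).cases_head with heq | ⟨w, hw, -⟩
      · exact hzx heq.symm
      · obtain ⟨x', he, hpsix'⟩ := lift_edge hE x hw
        have hx'A := hAcl x hx x' he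
        have hne2 : x ≠ x' := by
          intro hxx
          exact edge_dist_ne hE hw (by rw [← hpsix', ← hxx])
        exact hne2 (hsub hx hx'A)

end GRN
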